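/- Let M be an (H,u)-perfect pseudo MV-algebra with (H,u)-decomposition (M_t : t ∈ [0,u]_H), and let a ∈ M_v and b ∈ M_t. Then: (i) if v+t < u, the partial sum a+b is defined in M and a+b ∈ M_{v+t}; if a+b is defined in M, then v+t ≤ u; and if a+b is defined in M and v+t = u, then a+b ∈ M_u; (ii) if v+t < u, then M_v + M_t is defined in M and M_v + M_t = M_{v+t}; (iii) if v+t > u, then a+b is not defined in M; (iv) a∨b ∈ M_{v∨t} and a∧b ∈ M_{v∧t}. -/

import Mathlib

open Set

namespace PseudoMV

/-! ### Basic pseudo MV-algebra notions on the interval `Γ(K,v) = [0,v]`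
of a (not necessarily abelian) lattice-ordered group `K`. -/

section Defs

variable {K : Type*} [Lattice K] [AddGroup K]

/-- `v` is a strong (order) unit of `K`. -/
def IsStrongUnit (v : K) : Prop := 0 ≤ v ∧ ∀ x : K, ∃ n : ℕ, x ≤ n • v

/-- The carrier of the pseudo MV-algebra `Γ(K,v)`. -/
def carrier (v : K) : Set K := Set.Icc 0 v

/-- `x ⊕ y = (x + y) ⊓ v`. -/
def oplus (v x y : K) : K := (x + y) ⊓ v

/-- Left negation `x⁻ = v - x`. -/
def negL (v x : K) : K := v - x

/-- Right negation `x~ = -x + v`. -/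
def negR (v x : K) : K := -x + v

/-- `x ⊙ y = (x - v + y) ⊔ 0`. -/
def odot (v x y : K) : K := (x - v + y) ⊔ 0

/-- The partial sum `x + y` is defined in `Γ(K,v)`, i.e. the group sum lies in `[0,v]`. -/
def sumDef (v x y : K) : Prop := 0 ≤ x + y ∧ x + y ≤ v

/-- `n`-fold sum `n.x = x ⊕ ⋯ ⊕ x`. -/
def nOplus (v : K) : ℕ → K → K
  | 0, _ => 0
  | n + 1, x => oplus v (nOplus v n x) x

/-- `ord(x) < ∞`, i.e. some `n ≥ 1` satisfies `n.x = 1`. -/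
def OrdFinite (v x : K) : Prop := ∃ n : ℕ, 1 ≤ n ∧ nOplus v n x = v

/-- The set of infinitesimal elements: all `n`-fold partial sums `nx` are defined. -/
def Infinit (v : K) : Set K := {x | x ∈ carrier v ∧ ∀ n : ℕ, n • x ≤ v}

/-- An ideal of `Γ(K,v)`. -/
structure IsIdeal (v : K) (I : Set K) : Prop where
  subset : I ⊆ carrier v
  nonempty : I.Nonempty
  lower : ∀ a ∈ carrier v, ∀ b ∈ I, a ≤ b → a ∈ I
  oplus_mem : ∀ a ∈ I, ∀ b ∈ I, oplus v a b ∈ I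

/-- A normal ideal: `x ⊕ I = I ⊕ x` for every `x`. -/
def IsNormalIdeal (v : K) (I : Set K) : Prop :=
  IsIdeal v I ∧ ∀ x ∈ carrier v, (fun a => oplus v x a) '' I = (fun a => oplus v a x) '' I

/-- A maximal ideal: proper and not properly contained in a proper ideal. -/
def IsMaximalIdeal (v : K) (I : Set K) : Prop :=
  IsIdeal v I ∧ I ≠ carrier v ∧ ∀ J, IsIdeal v J → I ⊆ J → J ≠ carrier v → J = I

/-- A prime ideal. -/
def IsPrimeIdeal (v : K) (I : Set K) : Prop :=
  IsIdeal v I ∧ ∀ x ∈ carrier v, ∀ y ∈ carrier v, x ⊓ y ∈ I → x ∈ I ∨ y ∈ I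

/-- The radical: intersection of all maximal ideals. -/
def Rad (v : K) : Set K := ⋂₀ {I | IsMaximalIdeal v I}

/-- The normal radical: intersection of all maximal ideals that are normal. -/
def RadN (v : K) : Set K := ⋂₀ {I | IsMaximalIdeal v I ∧ IsNormalIdeal v I}

/-- Membership in the class `𝓜`: every maximal ideal is normal. -/
def MemClassM (v : K) : Prop := ∀ I, IsMaximalIdeal v I → IsNormalIdeal v I

/-- A symmetric pseudo MV-algebra: the two negations coincide. -/
def IsSymmetric (v : K) : Prop := ∀ x ∈ carrier v, negL v x = negR v x

/-- A local pseudo MV-algebra: a unique maximal ideal, which is moreover normal. -/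
def IsLocal (v : K) : Prop :=
  ∃ I, IsMaximalIdeal v I ∧ IsNormalIdeal v I ∧ ∀ J, IsMaximalIdeal v J → J = I

/-- A state on `Γ(K,v)`. -/
structure IsState (v : K) (s : K → ℝ) : Prop where
  maps_to : ∀ x ∈ carrier v, s x ∈ Set.Icc (0 : ℝ) 1
  map_unit : s v = 1
  additive : ∀ x ∈ carrier v, ∀ y ∈ carrier v, sumDef v x y → s (x + y) = s x + s y

/-- The kernel of a state. -/
def stateKer (v : K) (s : K → ℝ) : Set K := {x | x ∈ carrier v ∧ s x = 0}

/-- `x/I = y/I` in the quotient by the (normal) ideal `I`. -/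
def quotEq (v : K) (I : Set K) (x y : K) : Prop :=
  oplus v (odot v x (negL v y)) (odot v y (negL v x)) ∈ I

/-- `x/I ≤ y/I` in the quotient by the (normal) ideal `I`. -/
def quotLE (v : K) (I : Set K) (x y : K) : Prop := odot v x (negL v y) ∈ I

/-- A commutative ideal: a normal ideal with commutative quotient. -/
def IsCommutativeIdeal (v : K) (I : Set K) : Prop :=
  IsNormalIdeal v I ∧ ∀ x ∈ carrier v, ∀ y ∈ carrier v, quotEq v I (oplus v x y) (oplus v y x)

/-- A strict ideal: `x/I < y/I` implies `x < y`. -/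
def IsStrictIdeal (v : K) (I : Set K) : Prop :=
  ∀ x ∈ carrier v, ∀ y ∈ carrier v, quotLE v I x y → ¬ quotLE v I y x → x < y

/-- A retractive (normal) ideal: the canonical projection `π_I : M → M/I` admits a
homomorphic section `δ_I` with `π_I ∘ δ_I = id`.  We encode `δ_I` by the map
`d = δ_I ∘ π_I : M → M`, which must be constant on classes, a homomorphism with respect
to the quotient operations, and a section of `π_I`. -/
def IsRetractive (v : K) (I : Set K) : Prop :=
  ∃ d : K → K,
    (∀ x ∈ carrier v, d x ∈ carrier v) ∧
    (∀ x ∈ carrier v, ∀ y ∈ carrier v, quotEq v I x y → d x = d y) ∧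
    (∀ x ∈ carrier v, ∀ y ∈ carrier v, d (oplus v x y) = oplus v (d x) (d y)) ∧
    (∀ x ∈ carrier v, d (negL v x) = negL v (d x)) ∧
    (∀ x ∈ carrier v, d (negR v x) = negR v (d x)) ∧
    d 0 = 0 ∧ d v = v ∧
    (∀ x ∈ carrier v, quotEq v I (d x) x)

/-- A lexicographic ideal: a nontrivial proper commutative ideal that is strict,
retractive and prime. -/
def IsLexIdeal (v : K) (I : Set K) : Prop :=
  IsCommutativeIdeal v I ∧ I ≠ {0} ∧ I ≠ carrier v ∧
    IsStrictIdeal v I ∧ IsRetractive v I ∧ IsPrimeIdeal v I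

/-- A subalgebra of `Γ(K,v)`. -/
def IsSubalgebra (v : K) (S : Set K) : Prop :=
  S ⊆ carrier v ∧ 0 ∈ S ∧ v ∈ S ∧
    (∀ x ∈ S, ∀ y ∈ S, oplus v x y ∈ S) ∧
    (∀ x ∈ S, negL v x ∈ S) ∧ (∀ x ∈ S, negR v x ∈ S)

/-- The subalgebra generated by a subset. -/
def genSubalg (v : K) (A : Set K) : Set K := ⋂₀ {S | IsSubalgebra v S ∧ A ⊆ S}

end Defs

/-! ### `(H,u)`-decompositions -/

section Decomp

variable {H : Type*} [AddCommGroup H] [LinearOrder H] [IsOrderedAddMonoid H]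
variable {K : Type*} [Lattice K] [AddGroup K]

/-- An `(H,u)`-decomposition of the pseudo MV-algebra `Γ(K,v)`. -/
structure IsDecomposition (u : H) (v : K) (Md : H → Set K) : Prop where
  nonempty : ∀ t ∈ Set.Icc (0 : H) u, (Md t).Nonempty
  subset : ∀ t ∈ Set.Icc (0 : H) u, Md t ⊆ carrier v
  disjoint : ∀ s ∈ Set.Icc (0 : H) u, ∀ t ∈ Set.Icc (0 : H) u, s ≠ t → Md s ∩ Md t = ∅
  cover : ∀ x ∈ carrier v, ∃ t ∈ Set.Icc (0 : H) u, x ∈ Md t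
  mono : ∀ s ∈ Set.Icc (0 : H) u, ∀ t ∈ Set.Icc (0 : H) u, s < t →
    ∀ a ∈ Md s, ∀ b ∈ Md t, a ≤ b
  negL_eq : ∀ t ∈ Set.Icc (0 : H) u, negL v '' Md t = Md (u - t)
  negR_eq : ∀ t ∈ Set.Icc (0 : H) u, negR v '' Md t = Md (u - t)
  oplus_mem : ∀ s ∈ Set.Icc (0 : H) u, ∀ t ∈ Set.Icc (0 : H) u, ∀ x ∈ Md s, ∀ y ∈ Md t,
    oplus v x y ∈ Md (min (s + t) u)

/-- A strong cyclic family for an `(H,u)`-decomposition. -/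
def StrongCyclicFamily (u : H) (v : K) (Md : H → Set K) (c : H → K) : Prop :=
  (∀ t ∈ Set.Icc (0 : H) u, c t ∈ Md t ∧ ∀ x : K, c t + x = x + c t) ∧
  (∀ s ∈ Set.Icc (0 : H) u, ∀ t ∈ Set.Icc (0 : H) u, s + t ≤ u → c s + c t = c (s + t)) ∧
  c u = v

/-- A strong `(H,u)`-perfect pseudo MV-algebra. -/
def IsStrongPerfect (u : H) (v : K) : Prop :=
  ∃ Md c, IsDecomposition u v Md ∧ StrongCyclicFamily u v Md c

/-- A weak cyclic family for an `(H,u)`-decomposition. -/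
def WeakCyclicFamily (u : H) (v : K) (Md : H → Set K) (c : H → K) : Prop :=
  c 0 = 0 ∧
  (∀ t ∈ Set.Icc (0 : H) u, c t ∈ Md t ∧ ∀ x : K, c t + x = x + c t) ∧
  (∀ s ∈ Set.Icc (0 : H) u, ∀ t ∈ Set.Icc (0 : H) u, s + t ≤ u → c s + c t = c (s + t))

end Decomp

/-! ### Isomorphisms -/

section Iso

variable {K : Type*} [Lattice K] [AddGroup K]
variable {K' : Type*} [Lattice K'] [AddGroup K']

/-- An isomorphism of the pseudo MV-algebras `Γ(K,v)` and `Γ(K',v')` (encoded as a map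
`K → K'` whose restriction to `[0,v]` is a bijection onto `[0,v']` preserving all
pseudo MV-operations). -/
structure IsPMVIso (v : K) (v' : K') (f : K → K') : Prop where
  maps_to : ∀ x ∈ carrier v, f x ∈ carrier v'
  inj : ∀ x ∈ carrier v, ∀ y ∈ carrier v, f x = f y → x = y
  surj : ∀ y ∈ carrier v', ∃ x ∈ carrier v, f x = y
  map_zero : f 0 = 0
  map_unit : f v = v'
  map_oplus : ∀ x ∈ carrier v, ∀ y ∈ carrier v, f (oplus v x y) = oplus v' (f x) (f y)
  map_negL : ∀ x ∈ carrier v, f (negL v x) = negL v' (f x)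
  map_negR : ∀ x ∈ carrier v, f (negR v x) = negR v' (f x)

/-- The pseudo MV-algebras `Γ(K,v)` and `Γ(K',v')` are isomorphic. -/
def PMVIsomorphic (v : K) (v' : K') : Prop := ∃ f, IsPMVIso v v' f

end Iso

/-- An isomorphism of lattice-ordered groups: an order isomorphism that is additive. -/
def LGroupIsomorphic (G : Type*) (G' : Type*) [Lattice G] [AddGroup G] [Lattice G']
    [AddGroup G'] : Prop :=
  ∃ e : G ≃o G', ∀ x y : G, e (x + y) = e x + e y

/-! ### The lexicographic product of a linearly ordered group and a lattice-ordered group -/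

/-- The lexicographic product `H ×ₗ G`. -/
@[ext]
structure LexProd (H : Type*) (G : Type*) where
  fst : H
  snd : G

namespace LexProd

variable {H : Type*} {G : Type*}

section Group

variable [AddGroup H] [AddGroup G]

instance : Add (LexProd H G) := ⟨fun p q => ⟨p.fst + q.fst, p.snd + q.snd⟩⟩
instance : Zero (LexProd H G) := ⟨⟨0, 0⟩⟩
instance : Neg (LexProd H G) := ⟨fun p => ⟨-p.fst, -p.snd⟩⟩

instance : AddGroup (LexProd H G) :=
  AddGroup.ofLeftAxioms (fun a b c => LexProd.ext (add_assoc _ _ _) (add_assoc _ _ _))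
    (fun a => LexProd.ext (zero_add _) (zero_add _))
    (fun a => LexProd.ext (neg_add_cancel _) (neg_add_cancel _))

@[simp] lemma add_fst (p q : LexProd H G) : (p + q).fst = p.fst + q.fst := rfl
@[simp] lemma add_snd (p q : LexProd H G) : (p + q).snd = p.snd + q.snd := rfl
@[simp] lemma zero_fst : (0 : LexProd H G).fst = 0 := rfl
@[simp] lemma zero_snd : (0 : LexProd H G).snd = 0 := rfl

end Group

section Order

variable [LinearOrder H] [Lattice G]

instance : PartialOrder (LexProd H G) where
  le p q := p.fst < q.fst ∨ (p.fst = q.fst ∧ p.snd ≤ q.snd)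
  le_refl p := Or.inr ⟨rfl, le_rfl⟩
  le_trans p q r := by
    rintro (h | ⟨h1, h2⟩) (h' | ⟨h1', h2'⟩)
    · exact Or.inl (h.trans h')
    · exact Or.inl (h1' ▸ h)
    · exact Or.inl (h1 ▸ h')
    · exact Or.inr ⟨h1.trans h1', h2.trans h2'⟩
  le_antisymm p q := by
    rintro (h | ⟨h1, h2⟩) (h' | ⟨h1', h2'⟩)
    · exact absurd (h.trans h') (lt_irrefl _)
    · exact absurd h (h1' ▸ lt_irrefl _)
    · exact absurd h' (h1 ▸ lt_irrefl _)
    · exact LexProd.ext h1 (le_antisymm h2 h2')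

lemma le_def {p q : LexProd H G} :
    p ≤ q ↔ p.fst < q.fst ∨ (p.fst = q.fst ∧ p.snd ≤ q.snd) := Iff.rfl

instance : Lattice (LexProd H G) :=
  { (inferInstance : PartialOrder (LexProd H G)) with
    sup := fun p q =>
      if p.fst < q.fst then q else if q.fst < p.fst then p else ⟨p.fst, p.snd ⊔ q.snd⟩
    inf := fun p q =>
      if p.fst < q.fst then p else if q.fst < p.fst then q else ⟨p.fst, p.snd ⊓ q.snd⟩
    le_sup_left := fun p q => by
      try dsimp only
      split_ifs with h1 h2
      · exact Or.inl h1
      · exact le_rfl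
      · exact Or.inr ⟨rfl, le_sup_left⟩
    le_sup_right := fun p q => by
      try dsimp only
      split_ifs with h1 h2
      · exact le_rfl
      · exact Or.inl h2
      · exact Or.inr ⟨le_antisymm (not_lt.mp h1) (not_lt.mp h2), le_sup_right⟩
    sup_le := fun p q r hp hq => by
      try dsimp only
      split_ifs with h1 h2
      · exact hq
      · exact hp
      · have hfq : p.fst = q.fst := le_antisymm (not_lt.mp h2) (not_lt.mp h1)
        rcases hp with hp | ⟨hp1, hp2⟩
        · exact Or.inl hp
        · rcases hq with hq | ⟨hq1, hq2⟩
          · exact Or.inl (lt_of_eq_of_lt hfq hq)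
          · exact Or.inr ⟨hp1, sup_le hp2 hq2⟩
    inf_le_left := fun p q => by
      try dsimp only
      split_ifs with h1 h2
      · exact le_rfl
      · exact Or.inl h2
      · exact Or.inr ⟨rfl, inf_le_left⟩
    inf_le_right := fun p q => by
      try dsimp only
      split_ifs with h1 h2
      · exact Or.inl h1
      · exact le_rfl
      · exact Or.inr ⟨le_antisymm (not_lt.mp h2) (not_lt.mp h1), inf_le_right⟩
    le_inf := fun p q r hq hr => by
      try dsimp only
      split_ifs with h1 h2
      · exact hq
      · exact hr
      · have hfq : q.fst = r.fst := le_antisymm (not_lt.mp h2) (not_lt.mp h1)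
        rcases hq with hq | ⟨hq1, hq2⟩
        · exact Or.inl hq
        · rcases hr with hr | ⟨hr1, hr2⟩
          · exact Or.inl (lt_of_lt_of_eq hr hfq.symm)
          · exact Or.inr ⟨hq1, le_inf hq2 hr2⟩ }

end Order

section Covariant

variable [AddCommGroup H] [LinearOrder H] [IsOrderedAddMonoid H] [Lattice G] [AddGroup G]
  [CovariantClass G G (· + ·) (· ≤ ·)] [CovariantClass G G (Function.swap (· + ·)) (· ≤ ·)]

instance : CovariantClass (LexProd H G) (LexProd H G) (· + ·) (· ≤ ·) := by
  constructor
  rintro a x y (h | ⟨h1, h2⟩)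
  · exact Or.inl (add_lt_add_right h a.fst)
  · exact Or.inr ⟨by simp [h1], add_le_add_right h2 a.snd⟩

instance : CovariantClass (LexProd H G) (LexProd H G) (Function.swap (· + ·)) (· ≤ ·) := by
  constructor
  rintro a x y (h | ⟨h1, h2⟩)
  · exact Or.inl (add_lt_add_left h a.fst)
  · exact Or.inr ⟨by simp [h1], add_le_add_left h2 a.snd⟩

end Covariant

end LexProd

/-! ### Bundled lattice-ordered groups and linearly ordered unital abelian groups -/

universe u

/-- A bundled (not necessarily abelian) lattice-ordered group. -/
structure LGroupS : Type (u + 1) where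
  carrier : Type u
  [lat : Lattice carrier]
  [grp : AddGroup carrier]
  [cov_left : CovariantClass carrier carrier (· + ·) (· ≤ ·)]
  [cov_right : CovariantClass carrier carrier (Function.swap (· + ·)) (· ≤ ·)]

attribute [instance] LGroupS.lat LGroupS.grp LGroupS.cov_left LGroupS.cov_right

/-- A bundled linearly ordered abelian group with a strong unit. -/
structure LoGroupU : Type (u + 1) where
  carrier : Type u
  [addCommGroup : AddCommGroup carrier]
  [linearOrder : LinearOrder carrier]
  [isOrderedAddMonoid : IsOrderedAddMonoid carrier]
  unit : carrier
  isStrongUnit : IsStrongUnit unit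

attribute [instance] LoGroupU.addCommGroup LoGroupU.linearOrder LoGroupU.isOrderedAddMonoid

/-- A lexicographic pseudo MV-algebra: one isomorphic to `Γ(H ×ₗ G, (u,0))` for some
linearly ordered abelian group `H` with strong unit `u` and some ℓ-group `G`. -/
def IsLexicographicPMV.{u₁, u₂, u₃} {K : Type u₃} [Lattice K] [AddGroup K] (v : K) : Prop :=
  ∃ (Hs : LoGroupU.{u₁}) (Gs : LGroupS.{u₂}),
    PMVIsomorphic v (LexProd.mk Hs.unit (0 : Gs.carrier))

end PseudoMV

section AuxLemmas

open PseudoMV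

variable {H : Type*} [AddCommGroup H] [LinearOrder H] [IsOrderedAddMonoid H] {K : Type*} [Lattice K] [AddGroup K]
    [CovariantClass K K (· + ·) (· ≤ ·)] [CovariantClass K K (Function.swap (· + ·)) (· ≤ ·)]
    {u : H} {v : K} {Md : H → Set K}

private lemma aux_classEq (hMd : IsDecomposition u v Md) {α β : H}
    (hα : α ∈ Set.Icc (0 : H) u) (hβ : β ∈ Set.Icc (0 : H) u) {x : K}
    (hx : x ∈ Md α) (hy : x ∈ Md β) : α = β := by
  by_contra h
  have hd := hMd.disjoint α hα β hβ h
  exact Set.eq_empty_iff_forall_notMem.mp hd x ⟨hx, hy⟩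

private lemma aux_iccsub {α : H} (hα : α ∈ Set.Icc (0 : H) u) :
    u - α ∈ Set.Icc (0 : H) u :=
  ⟨sub_nonneg.mpr hα.2, sub_le_self u hα.1⟩

private lemma aux_negL_mem (hMd : IsDecomposition u v Md) {α : H}
    (hα : α ∈ Set.Icc (0 : H) u) {x : K} (hx : x ∈ Md α) : v - x ∈ Md (u - α) := by
  have h := hMd.negL_eq α hα
  rw [← h]
  exact ⟨x, hx, rfl⟩

private lemma aux_negR_mem (hMd : IsDecomposition u v Md) {α : H}
    (hα : α ∈ Set.Icc (0 : H) u) {x : K} (hx : x ∈ Md α) : -x + v ∈ Md (u - α) := by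
  have h := hMd.negR_eq α hα
  rw [← h]
  exact ⟨x, hx, rfl⟩

/-- (i), first part. -/
private lemma aux_sum (hMd : IsDecomposition u v Md) {s t : H}
    (hs : s ∈ Set.Icc (0 : H) u) (ht : t ∈ Set.Icc (0 : H) u) (hlt : s + t < u)
    {a b : K} (ha : a ∈ Md s) (hb : b ∈ Md t) :
    sumDef v a b ∧ a + b ∈ Md (s + t) := by
  have hac := hMd.subset s hs ha
  have hbc := hMd.subset t ht hb
  have hnb : v - b ∈ Md (u - t) := aux_negL_mem hMd ht hb
  have hst : s < u - t := lt_sub_iff_add_lt.mpr hlt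
  have hal : a ≤ v - b := hMd.mono s hs (u - t) (aux_iccsub ht) hst a ha (v - b) hnb
  have hle : a + b ≤ v := by
    have h := add_le_add_left hal b
    rwa [sub_add_cancel] at h
  have h0 : (0 : K) ≤ a + b := add_nonneg hac.1 hbc.1
  refine ⟨⟨h0, hle⟩, ?_⟩
  have h := hMd.oplus_mem s hs t ht a ha b hb
  rwa [oplus, inf_eq_left.mpr hle, min_eq_left hlt.le] at h

/-- (i), second part. -/
private lemma aux_le (hMd : IsDecomposition u v Md) {s t : H}
    (hs : s ∈ Set.Icc (0 : H) u) (ht : t ∈ Set.Icc (0 : H) u)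
    {a b : K} (ha : a ∈ Md s) (hb : b ∈ Md t) (hd : sumDef v a b) : s + t ≤ u := by
  by_contra h
  push_neg at h
  have hnb : v - b ∈ Md (u - t) := aux_negL_mem hMd ht hb
  have h1 : u - t < s := sub_lt_iff_lt_add.mpr h
  have h2 : v - b ≤ a := hMd.mono (u - t) (aux_iccsub ht) s hs h1 (v - b) hnb a ha
  have h3 : a ≤ v - b := by
    have h4 := add_le_add_left hd.2 (-b)
    rwa [add_neg_cancel_right, ← sub_eq_add_neg] at h4
  have h5 : a = v - b := le_antisymm h3 h2
  have h6 : s = u - t := aux_classEq hMd hs (aux_iccsub ht) ha (by rw [h5]; exact hnb)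
  rw [h6, sub_add_cancel] at h
  exact lt_irrefl u h

/-- (i), third part. -/
private lemma aux_eq_u (hMd : IsDecomposition u v Md) {s t : H}
    (hs : s ∈ Set.Icc (0 : H) u) (ht : t ∈ Set.Icc (0 : H) u)
    {a b : K} (ha : a ∈ Md s) (hb : b ∈ Md t) (hd : sumDef v a b) (heq : s + t = u) :
    a + b ∈ Md u := by
  have h := hMd.oplus_mem s hs t ht a ha b hb
  rwa [oplus, inf_eq_left.mpr hd.2, heq, min_self] at h

private lemma aux_zero_mem (hMd : IsDecomposition u v Md) (hv : IsStrongUnit v)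
    (hu0 : (0 : H) ≤ u) : (0 : K) ∈ Md 0 := by
  obtain ⟨r, hr, h0r⟩ := hMd.cover 0 ⟨le_refl 0, hv.1⟩
  rcases eq_or_lt_of_le hr.1 with h | h
  · rwa [← h] at h0r
  · obtain ⟨x, hx⟩ := hMd.nonempty 0 ⟨le_refl 0, hu0⟩
    have hxle : x ≤ 0 := hMd.mono 0 ⟨le_refl 0, hu0⟩ r hr h x hx 0 h0r
    have hx0 : x = 0 := le_antisymm hxle (hMd.subset 0 ⟨le_refl 0, hu0⟩ hx).1
    have heq : (0 : H) = r :=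
      aux_classEq hMd ⟨le_refl 0, hu0⟩ hr (by rw [← hx0]; exact hx) h0r
    exact absurd heq (ne_of_lt h)

/-- (iv), sup part. -/
private lemma aux_sup (hMd : IsDecomposition u v Md) {s t : H}
    (hs : s ∈ Set.Icc (0 : H) u) (ht : t ∈ Set.Icc (0 : H) u)
    {a b : K} (ha : a ∈ Md s) (hb : b ∈ Md t) : a ⊔ b ∈ Md (max s t) := by
  have hac := hMd.subset s hs ha
  have hbc := hMd.subset t ht hb
  have hcar : a ⊔ b ∈ carrier v := ⟨le_trans hac.1 le_sup_left, sup_le hac.2 hbc.2⟩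
  obtain ⟨r, hr, hab⟩ := hMd.cover _ hcar
  suffices h : r = max s t by rwa [← h]
  have hrs : s ≤ r := by
    by_contra hc
    push_neg at hc
    have h1 : a ⊔ b ≤ a := hMd.mono r hr s hs hc _ hab a ha
    have h2 : a ⊔ b = a := le_antisymm h1 le_sup_left
    exact absurd (aux_classEq hMd hr hs hab (by rw [h2]; exact ha)) (ne_of_lt hc)
  have hrt : t ≤ r := by
    by_contra hc
    push_neg at hc
    have h1 : a ⊔ b ≤ b := hMd.mono r hr t ht hc _ hab b hb
    have h2 : a ⊔ b = b := le_antisymm h1 le_sup_right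
    exact absurd (aux_classEq hMd hr ht hab (by rw [h2]; exact hb)) (ne_of_lt hc)
  have hrm : r ≤ max s t := by
    by_contra hc
    push_neg at hc
    have hsr : s < r := lt_of_le_of_lt (le_max_left s t) hc
    have htr : t < r := lt_of_le_of_lt (le_max_right s t) hc
    have hnr : v - (a ⊔ b) ∈ Md (u - r) := aux_negL_mem hMd hr hab
    have hnb : v - b ∈ Md (u - t) := aux_negL_mem hMd ht hb
    have he := hMd.oplus_mem (u - r) (aux_iccsub hr) s hs _ hnr a ha
    have hf := hMd.oplus_mem (u - t) (aux_iccsub ht) s hs _ hnb a ha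
    have hef : oplus v (v - (a ⊔ b)) a = oplus v (v - b) a := by
      have hsplit : v - (a ⊔ b) = (v - a) ⊓ (v - b) := by
        rw [sub_eq_add_neg, neg_sup, add_inf, ← sub_eq_add_neg, ← sub_eq_add_neg]
      rw [oplus, oplus, hsplit, inf_add, sub_add_cancel, inf_comm v (v - b + a),
        inf_assoc, inf_idem]
    rw [hef] at he
    have hu0 : (0 : H) ≤ u := hr.1.trans hr.2
    have hicc1 : min (u - r + s) u ∈ Set.Icc (0 : H) u :=
      ⟨le_min (add_nonneg (aux_iccsub hr).1 hs.1) hu0, min_le_right _ _⟩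
    have hicc2 : min (u - t + s) u ∈ Set.Icc (0 : H) u :=
      ⟨le_min (add_nonneg (aux_iccsub ht).1 hs.1) hu0, min_le_right _ _⟩
    have heq := aux_classEq hMd hicc1 hicc2 he hf
    have h1 : u - r + s < u := by
      have h2 : u - r + s < u - r + r := add_lt_add_right hsr _
      rwa [sub_add_cancel] at h2
    rw [min_eq_left h1.le] at heq
    rcases le_or_gt u (u - t + s) with h2 | h2
    · rw [min_eq_right h2] at heq
      exact absurd heq (ne_of_lt h1)
    · rw [min_eq_left h2.le] at heq
      have h3 : u - r = u - t := add_right_cancel heq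
      have h4 : r = t := by
        have h5 := congrArg (fun x => u - x) h3
        simpa [sub_sub_cancel] using h5
      exact absurd h4 (ne_of_gt htr)
  exact le_antisymm hrm (max_le hrs hrt)

/-- (iv), inf part. -/
private lemma aux_inf (hMd : IsDecomposition u v Md) {s t : H}
    (hs : s ∈ Set.Icc (0 : H) u) (ht : t ∈ Set.Icc (0 : H) u)
    {a b : K} (ha : a ∈ Md s) (hb : b ∈ Md t) : a ⊓ b ∈ Md (min s t) := by
  have h1 : (v - a) ⊔ (v - b) ∈ Md (max (u - s) (u - t)) :=
    aux_sup hMd (aux_iccsub hs) (aux_iccsub ht) (aux_negL_mem hMd hs ha)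
      (aux_negL_mem hMd ht hb)
  have h2 : max (u - s) (u - t) = u - min s t := by
    rcases le_total s t with h | h
    · rw [min_eq_left h, max_eq_left (sub_le_sub_left h u)]
    · rw [min_eq_right h, max_eq_right (sub_le_sub_left h u)]
  rw [h2] at h1
  have hmicc : min s t ∈ Set.Icc (0 : H) u :=
    ⟨le_min hs.1 ht.1, le_trans (min_le_left s t) hs.2⟩
  have h3 := aux_negR_mem hMd (aux_iccsub hmicc) h1
  rw [sub_sub_cancel] at h3
  have h4 : -((v - a) ⊔ (v - b)) + v = a ⊓ b := by
    rw [neg_sup, neg_sub, neg_sub, inf_add, sub_add_cancel, sub_add_cancel]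
  rwa [h4] at h3

/-- (ii), surjectivity part. -/
private lemma aux_surj (hMd : IsDecomposition u v Md) (hu : IsStrongUnit u)
    (hv : IsStrongUnit v) {s t : H}
    (hs : s ∈ Set.Icc (0 : H) u) (ht : t ∈ Set.Icc (0 : H) u) (hlt : s + t < u)
    {z : K} (hz : z ∈ Md (s + t)) :
    ∃ a' ∈ Md s, ∃ b' ∈ Md t, sumDef v a' b' ∧ a' + b' = z := by
  have hstIcc : s + t ∈ Set.Icc (0 : H) u := ⟨add_nonneg hs.1 ht.1, hlt.le⟩
  have hzc := hMd.subset _ hstIcc hz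
  rcases eq_or_lt_of_le hs.1 with h0 | h0
  · refine ⟨0, by rw [← h0]; exact aux_zero_mem hMd hv hu.1, z, ?_, ⟨?_, ?_⟩, zero_add z⟩
    · have h1 : s + t = t := by rw [← h0, zero_add]
      rwa [h1] at hz
    · rw [zero_add]; exact hzc.1
    · rw [zero_add]; exact hzc.2
  · obtain ⟨b0, hb0⟩ := hMd.nonempty t ht
    have hts : t < s + t := lt_add_of_pos_left t h0
    have hb0z : b0 ≤ z := hMd.mono t ht (s + t) hstIcc hts b0 hb0 z hz
    have hb0c := hMd.subset t ht hb0
    have ha'le : z - b0 ≤ z := by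
      have h1 : z + -b0 ≤ z + 0 := add_le_add_right (neg_nonpos.mpr hb0c.1) z
      rwa [add_zero, ← sub_eq_add_neg] at h1
    have ha'c : z - b0 ∈ carrier v := ⟨sub_nonneg.mpr hb0z, le_trans ha'le hzc.2⟩
    obtain ⟨q, hq, haq⟩ := hMd.cover _ ha'c
    have hsum : z - b0 + b0 = z := sub_add_cancel z b0
    have hsd : sumDef v (z - b0) b0 :=
      ⟨by rw [hsum]; exact hzc.1, by rw [hsum]; exact hzc.2⟩
    have hqt : q + t ≤ u := aux_le hMd hq ht haq hb0 hsd
    rcases eq_or_lt_of_le hqt with he | hl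
    · have h1 := aux_eq_u hMd hq ht haq hb0 hsd he
      rw [hsum] at h1
      have h2 : u = s + t :=
        aux_classEq hMd ⟨hu.1, le_refl u⟩ hstIcc h1 hz
      exact absurd h2.symm (ne_of_lt hlt)
    · have hmem := (aux_sum hMd hq ht hl haq hb0).2
      rw [hsum] at hmem
      have hqticc : q + t ∈ Set.Icc (0 : H) u := ⟨add_nonneg hq.1 ht.1, hqt⟩
      have h1 : q + t = s + t := aux_classEq hMd hqticc hstIcc hmem hz
      have hqs : q = s := add_right_cancel h1
      exact ⟨z - b0, by rw [← hqs]; exact haq, b0, hb0, hsd, hsum⟩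

end AuxLemmas

open PseudoMV in

open PseudoMV in
/-- Theorem 3.2 (i)--(iv): arithmetic of an `(H,u)`-decomposition of an `(H,u)`-perfect
pseudo MV-algebra `M = Γ(K,v)`. -/
theorem stmt_0 {H : Type*} [AddCommGroup H] [LinearOrder H] [IsOrderedAddMonoid H] {K : Type*} [Lattice K] [AddGroup K]
    [CovariantClass K K (· + ·) (· ≤ ·)] [CovariantClass K K (Function.swap (· + ·)) (· ≤ ·)]
    (u : H) (hu : IsStrongUnit u) (v : K) (hv : IsStrongUnit v)
    (Md : H → Set K) (hMd : IsDecomposition u v Md)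
    (s t : H) (hs : s ∈ Set.Icc (0 : H) u) (ht : t ∈ Set.Icc (0 : H) u)
    (a b : K) (ha : a ∈ Md s) (hb : b ∈ Md t) :
    ((s + t < u → sumDef v a b ∧ a + b ∈ Md (s + t)) ∧
      (sumDef v a b → s + t ≤ u) ∧
      (sumDef v a b → s + t = u → a + b ∈ Md u)) ∧
    (s + t < u →
      ((∀ a' ∈ Md s, ∀ b' ∈ Md t, sumDef v a' b') ∧
        {z : K | ∃ a' ∈ Md s, ∃ b' ∈ Md t, sumDef v a' b' ∧ a' + b' = z} = Md (s + t))) ∧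
    (u < s + t → ¬ sumDef v a b) ∧
    (a ⊔ b ∈ Md (max s t) ∧ a ⊓ b ∈ Md (min s t)) := by
  refine ⟨⟨fun hlt => aux_sum hMd hs ht hlt ha hb,
    fun hd => aux_le hMd hs ht ha hb hd,
    fun hd heq => aux_eq_u hMd hs ht ha hb hd heq⟩, ?_, ?_, ?_, ?_⟩
  · intro hlt
    refine ⟨fun a' ha' b' hb' => (aux_sum hMd hs ht hlt ha' hb').1, ?_⟩
    ext z
    constructor
    · rintro ⟨a', ha', b', hb', _, rfl⟩
      exact (aux_sum hMd hs ht hlt ha' hb').2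
    · intro hz
      exact aux_surj hMd hu hv hs ht hlt hz
  · intro h hd
    exact absurd (aux_le hMd hs ht ha hb hd) (not_le.mpr h)
  · exact aux_sup hMd hs ht ha hb
  · exact aux_inf hMd hs ht ha hb
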